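/- Let S = {p₁ < p₂ < ⋯} be a set of primes of positive (natural) density c > 0 and let (cₙ) be real numbers. Suppose the mathematical expectations E(νₙ) = (1/n)∑_{i=1}^{n} c_i/p_i converge to a real number ℓ. If ℓ ≠ 0, then the series ∑_{n>0} cₙ/pₙ² diverges. -/

import Mathlib

open Filter

lemma L1 : ¬ Summable (fun n : ℕ => 1 / (((n:ℝ)+1) * Real.log ((n:ℝ)+1))) := by
  intro hs
  have hcond : Summable fun k : ℕ => (2:ℝ)^k * (1 / (((2^k:ℕ):ℝ)+1) / Real.log (((2^k:ℕ):ℝ)+1)) := by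
    have := (summable_condensed_iff_of_nonneg
      (f := fun n : ℕ => 1 / (((n:ℝ)+1) * Real.log ((n:ℝ)+1)))
      (fun n => by
        have : (0:ℝ) ≤ Real.log ((n:ℝ)+1) := Real.log_nonneg (by push_cast; linarith [Nat.cast_nonneg (α:=ℝ) n])
        positivity)
      (fun m n hm hmn => by
        have h1 : (1:ℝ) ≤ (m:ℝ) := by exact_mod_cast hm
        have h2 : (m:ℝ) ≤ n := by exact_mod_cast hmn
        have hlog : 0 < Real.log ((m:ℝ)+1) := Real.log_pos (by linarith)
        have hlog2 : Real.log ((m:ℝ)+1) ≤ Real.log ((n:ℝ)+1) :=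
          Real.log_le_log (by linarith) (by linarith)
        apply one_div_le_one_div_of_le
        · positivity
        · have : (0:ℝ) < (m:ℝ)+1 := by linarith
          nlinarith)).mpr hs
    exact this.congr (fun k => by rw [one_div, mul_inv, one_div, div_eq_mul_inv])
  -- lower bound: 2^k/((2^k+1) log(2^k+1)) ≥ (1/(2 log 2)) * (1/(k+1))
  have hsum2 : Summable fun k : ℕ => (1/(2*Real.log 2)) * (1/((k:ℝ)+1)) := by
    apply Summable.of_nonneg_of_le (fun k => by positivity) _ hcond
    intro k
    have h2k : (1:ℝ) ≤ (2:ℝ)^k := one_le_pow₀ (by norm_num)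
    have hle : ((2^k:ℕ):ℝ) + 1 ≤ (2:ℝ)^(k+1) := by
      push_cast; rw [pow_succ]; linarith
    have hlogpos : (0:ℝ) < Real.log 2 := Real.log_pos (by norm_num)
    have hlog : Real.log (((2^k:ℕ):ℝ)+1) ≤ ((k:ℝ)+1) * Real.log 2 := by
      calc Real.log (((2^k:ℕ):ℝ)+1) ≤ Real.log ((2:ℝ)^(k+1)) :=
            Real.log_le_log (by positivity) hle
        _ = ((k:ℝ)+1) * Real.log 2 := by rw [Real.log_pow]; push_cast; ring
    have hlogpos' : (0:ℝ) < Real.log (((2^k:ℕ):ℝ)+1) := by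
      apply Real.log_pos; push_cast; nlinarith
    have h1 : (2:ℝ)^k / (((2^k:ℕ):ℝ)+1) ≥ 1/2 := by
      rw [ge_iff_le, div_le_div_iff₀ (by norm_num) (by positivity)]
      push_cast; linarith
    calc (1/(2*Real.log 2)) * (1/((k:ℝ)+1)) = (1/2) * (1/(((k:ℝ)+1)*Real.log 2)) := by
          field_simp
      _ ≤ ((2:ℝ)^k / (((2^k:ℕ):ℝ)+1)) * (1/Real.log (((2^k:ℕ):ℝ)+1)) := by
          apply mul_le_mul h1
          · apply one_div_le_one_div_of_le hlogpos' hlog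
          · positivity
          · positivity
      _ = (2:ℝ)^k * (1 / (((2^k:ℕ):ℝ)+1) / Real.log (((2^k:ℕ):ℝ)+1)) := by ring
  have : Summable fun k : ℕ => 1/((k:ℝ)+1) := by
    have hne : (1/(2*Real.log 2)) ≠ 0 := by
      have : (0:ℝ) < Real.log 2 := Real.log_pos (by norm_num); positivity
    exact (summable_mul_left_iff hne).mp hsum2
  have h2 : Summable fun k : ℕ => 1/(((k+1:ℕ)):ℝ) := by push_cast; exact this
  exact Real.not_summable_one_div_natCast ((summable_nat_add_iff 1).mp h2)
lemma L2 (p : ℕ → ℕ) (hp : ∀ n, (p n).Prime) (hmono : StrictMono p)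
    (d : ℝ) (hd : 0 < d)
    (hdens : Tendsto
      (fun t : ℝ => (Nat.card {n : ℕ | (p n : ℝ) ≤ t} : ℝ) * Real.log t / t)
      atTop (nhds d)) :
    ∀ᶠ N : ℕ in atTop, (p N : ℝ) ≤ (8/d) * (((N:ℝ)+1) * Real.log ((N:ℝ)+1)) := by
  have hppos : ∀ n, (0:ℝ) < p n := fun n => by exact_mod_cast (hp n).pos
  have hp2 : ∀ n, (2:ℝ) ≤ p n := fun n => by exact_mod_cast (hp n).two_le
  have hcard : ∀ N : ℕ, {n : ℕ | (p n : ℝ) ≤ (p N : ℝ)} = ↑(Finset.Iic N) := by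
    intro N; ext n
    simp [Nat.cast_le, hmono.le_iff_le]
  have hpt : Tendsto (fun N : ℕ => (p N : ℝ)) atTop atTop :=
    tendsto_natCast_atTop_atTop.comp (tendsto_atTop_mono (fun n => hmono.le_apply) tendsto_id)
  have h1 : Tendsto (fun N : ℕ => ((N:ℝ)+1) * Real.log (p N) / p N) atTop (nhds d) := by
    have := hdens.comp hpt
    convert this using 2 with N
    simp only [Function.comp_apply, hcard N, Nat.card_coe_set_eq, Set.ncard_coe_finset, Nat.card_Iic]
    push_cast; ring
  have h2 : ∀ᶠ N : ℕ in atTop, d/2 ≤ ((N:ℝ)+1) * Real.log (p N) / p N :=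
    h1.eventually (eventually_ge_nhds (by linarith))
  have hlogsqrt : ∀ n, Real.log (p n) ≤ 2 * Real.sqrt (p n) := by
    intro n
    have h0 : (0:ℝ) < p n := hppos n
    have hs : 0 < Real.sqrt (p n) := Real.sqrt_pos.mpr h0
    have := Real.log_le_sub_one_of_pos hs
    have hls : Real.log (Real.sqrt (p n)) = Real.log (p n) / 2 := Real.log_sqrt h0.le
    linarith
  have h3 : ∀ᶠ N : ℕ in atTop, Real.sqrt (p N) ≤ (4/d) * ((N:ℝ)+1) := by
    filter_upwards [h2] with N h2N
    have h0 : (0:ℝ) < p N := hppos N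
    have hsq : Real.sqrt (p N) ^ 2 = (p N : ℝ) := Real.sq_sqrt h0.le
    have hs : 0 < Real.sqrt (p N) := Real.sqrt_pos.mpr h0
    have hN1 : (0:ℝ) < (N:ℝ)+1 := by positivity
    have hb : (p N : ℝ) * (d/2) ≤ ((N:ℝ)+1) * Real.log (p N) := by
      rw [le_div_iff₀ h0] at h2N; linarith
    have hls := hlogsqrt N
    have key : Real.sqrt (p N) * d ≤ 4*((N:ℝ)+1) := by
      nlinarith [mul_le_mul_of_nonneg_left hls hN1.le, hsq, hs, hd]
    rw [div_mul_eq_mul_div, le_div_iff₀ hd]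
    linarith
  have h4 : ∀ᶠ N : ℕ in atTop, (4/d : ℝ) ≤ (N:ℝ)+1 := by
    filter_upwards [eventually_ge_atTop (Nat.ceil (4/d : ℝ))] with N hN
    calc (4/d:ℝ) ≤ Nat.ceil (4/d:ℝ) := Nat.le_ceil _
      _ ≤ (N:ℝ) := by exact_mod_cast hN
      _ ≤ (N:ℝ)+1 := by linarith
  filter_upwards [h2, h3, h4] with N h2N h3N h4N
  have h0 : (0:ℝ) < p N := hppos N
  have hN1 : (1:ℝ) ≤ (N:ℝ)+1 := by have := Nat.cast_nonneg (α:=ℝ) N; linarith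
  have hlogN : 0 ≤ Real.log ((N:ℝ)+1) := Real.log_nonneg hN1
  have hdpos : (0:ℝ) < 4/d := by positivity
  have hlogp : Real.log (p N) ≤ 4 * Real.log ((N:ℝ)+1) := by
    have hls : Real.log (Real.sqrt (p N)) = Real.log (p N) / 2 := Real.log_sqrt h0.le
    have hs : 0 < Real.sqrt (p N) := Real.sqrt_pos.mpr h0
    have := Real.log_le_log hs h3N
    have hlog2 : Real.log ((4/d) * ((N:ℝ)+1)) = Real.log (4/d) + Real.log ((N:ℝ)+1) :=
      Real.log_mul (ne_of_gt hdpos) (by linarith)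
    have hld : Real.log (4/d) ≤ Real.log ((N:ℝ)+1) := Real.log_le_log hdpos h4N
    linarith
  have hb : (p N : ℝ) * (d/2) ≤ ((N:ℝ)+1) * Real.log (p N) := by
    rw [le_div_iff₀ h0] at h2N; linarith
  have : (p N:ℝ) * (d/2) ≤ ((N:ℝ)+1) * (4 * Real.log ((N:ℝ)+1)) := by
    nlinarith
  rw [div_mul_eq_mul_div, le_div_iff₀ hd]
  nlinarith

lemma L3 (p : ℕ → ℕ) (hp : ∀ n, (p n).Prime) (hmono : StrictMono p)
    (d : ℝ) (hd : 0 < d)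
    (hdens : Tendsto
      (fun t : ℝ => (Nat.card {n : ℕ | (p n : ℝ) ≤ t} : ℝ) * Real.log t / t)
      atTop (nhds d)) :
    Tendsto (fun N => ∑ n ∈ Finset.range N, ((p n : ℝ))⁻¹) atTop atTop := by
  have hppos : ∀ n, (0:ℝ) < p n := fun n => by exact_mod_cast (hp n).pos
  rw [← not_summable_iff_tendsto_nat_atTop_of_nonneg (fun n => by positivity)]
  intro hs
  obtain ⟨N₀, hN₀⟩ := eventually_atTop.mp (L2 p hp hmono d hd hdens)
  set f : ℕ → ℝ := fun n => 1 / (((n:ℝ)+1) * Real.log ((n:ℝ)+1)) with hf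
  have hfnonneg : ∀ n, 0 ≤ f n := fun n => by
    have : (0:ℝ) ≤ Real.log ((n:ℝ)+1) :=
      Real.log_nonneg (by have := Nat.cast_nonneg (α:=ℝ) n; linarith)
    positivity
  have hcomp : ∀ n : ℕ, (d/8) * f (n + N₀) ≤ ((p (n + N₀) : ℝ))⁻¹ := by
    intro n
    set m := n + N₀ with hm
    have hb := hN₀ m (by omega)
    rcases Nat.eq_zero_or_pos m with h0 | h1
    · rw [h0]
      simp only [hf, Nat.cast_zero, zero_add, Real.log_one, mul_zero, div_zero, mul_zero]
      positivity
    · have hm1 : (1:ℝ) ≤ (m:ℝ) := by exact_mod_cast h1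
      have hX : (0:ℝ) < ((m:ℝ)+1) * Real.log ((m:ℝ)+1) := by
        have : (0:ℝ) < Real.log ((m:ℝ)+1) := Real.log_pos (by linarith)
        positivity
      rw [hf]
      have h8d : (0:ℝ) < 8/d := by positivity
      have hple : (p m : ℝ) ≤ (8/d) * (((m:ℝ)+1) * Real.log ((m:ℝ)+1)) := hb
      have := one_div_le_one_div_of_le (hppos m) hple
      calc (d/8) * (1 / (((m:ℝ)+1) * Real.log ((m:ℝ)+1)))
          = 1 / ((8/d) * (((m:ℝ)+1) * Real.log ((m:ℝ)+1))) := by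
            field_simp
        _ ≤ 1 / (p m : ℝ) := this
        _ = ((p m : ℝ))⁻¹ := one_div _
  have hs' : Summable fun n : ℕ => ((p (n + N₀) : ℝ))⁻¹ := (summable_nat_add_iff N₀).mpr hs
  have hsum : Summable fun n : ℕ => (d/8) * f (n + N₀) :=
    Summable.of_nonneg_of_le (fun n => by
      have := hfnonneg (n + N₀); positivity) hcomp hs'
  have : Summable fun n : ℕ => f (n + N₀) :=
    (summable_mul_left_iff (by positivity : (d/8:ℝ) ≠ 0)).mp hsum
  exact L1 ((summable_nat_add_iff N₀).mp this)
lemma auxpos (p : ℕ → ℕ) (hp : ∀ n, (p n).Prime) (hmono : StrictMono p)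
    (d : ℝ) (hd : 0 < d)
    (hdens : Tendsto
      (fun t : ℝ => (Nat.card {n : ℕ | (p n : ℝ) ≤ t} : ℝ) * Real.log t / t)
      atTop (nhds d))
    (c : ℕ → ℝ) (ℓ : ℝ) (hℓ : 0 < ℓ)
    (hexp : Tendsto (fun n : ℕ => (∑ i ∈ Finset.range n, c i / (p i : ℝ)) / n)
      atTop (nhds ℓ))
    (l : ℝ) (hl : Tendsto (fun N => ∑ n ∈ Finset.range N, c n / (p n : ℝ) ^ 2)
      atTop (nhds l)) : False := by
  have hppos : ∀ n, (0:ℝ) < p n := fun n => by exact_mod_cast (hp n).pos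
  have hpn : ∀ n : ℕ, n + 2 ≤ p n := by
    intro n
    induction n with
    | zero => simpa using (hp 0).two_le
    | succ k ih => have := hmono (lt_add_one k); omega
  set b : ℕ → ℝ := fun n => ((p n : ℝ))⁻¹ with hbdef
  set S : ℕ → ℝ := fun n => ∑ i ∈ Finset.range n, c i / (p i : ℝ) with hSdef
  set A : ℕ → ℝ := fun N => ∑ n ∈ Finset.range N, c n / (p n : ℝ) ^ 2 with hAdef
  have hbpos : ∀ n, 0 < b n := fun n => by simp only [hbdef]; exact inv_pos.mpr (hppos n)
  have hbmono : ∀ n, b (n+1) ≤ b n := by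
    intro n
    simp only [hbdef]
    apply inv_anti₀ (hppos n)
    exact_mod_cast (hmono (lt_add_one n)).le
  have hAstep : ∀ N, A (N+1) = A N + (S (N+1) - S N) * b N := by
    intro N
    simp only [hAdef, hSdef, hbdef, Finset.sum_range_succ]
    have h0 := (hppos N).ne'
    field_simp
    ring
  -- choice of M
  obtain ⟨M₀, hM₀⟩ := eventually_atTop.mp (hexp.eventually (eventually_ge_nhds (by linarith : ℓ/2 < ℓ)))
  set M := max M₀ 1 with hMdef
  have hM : ∀ n, M ≤ n → (ℓ/2) * n ≤ S n := by
    intro n hn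
    have h1 : 1 ≤ n := le_trans (le_max_right _ _) hn
    have hnpos : (0:ℝ) < n := by exact_mod_cast h1
    have := hM₀ n (le_trans (le_max_left _ _) hn)
    rw [le_div_iff₀ hnpos] at this
    linarith
  -- key induction (Abel summation lower bound)
  have claim : ∀ K, M ≤ K →
      A M + S (K+1) * b K - S M * b M
        + (ℓ/2) * (((M:ℝ)+1) * b M - ((K:ℝ)+1) * b K
            + ∑ n ∈ Finset.Ico (M+1) (K+1), b n) ≤ A (K+1) := by
    intro K hK
    induction K, hK using Nat.le_induction with
    | base =>
      rw [hAstep M]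
      simp only [Finset.Ico_self, Finset.sum_empty]
      apply le_of_eq
      ring
    | succ K hK ih =>
      rw [hAstep (K+1)]
      have h1 : b (K+1) ≤ b K := hbmono K
      have h2 : (ℓ/2) * ((K:ℝ)+1) ≤ S (K+1) := by
        have := hM (K+1) (by omega)
        push_cast at this
        linarith
      have hsum : ∑ n ∈ Finset.Ico (M+1) (K+1+1), b n
          = (∑ n ∈ Finset.Ico (M+1) (K+1), b n) + b (K+1) :=
        Finset.sum_Ico_succ_top (by omega) _
      have key : 0 ≤ (S (K+1) - (ℓ/2)*((K:ℝ)+1)) * (b K - b (K+1)) :=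
        mul_nonneg (by linarith) (by linarith)
      rw [hsum]
      push_cast
      nlinarith [ih, key]
  -- divergence
  have hdiv : Tendsto (fun N => ∑ n ∈ Finset.range N, b n) atTop atTop :=
    L3 p hp hmono d hd hdens
  have hev : ∀ᶠ j : ℕ in atTop,
      (A M - S M * b M - ℓ/2 - (ℓ/2) * ∑ n ∈ Finset.range (M+1), b n)
        + (ℓ/2) * ∑ n ∈ Finset.range j, b n ≤ A j := by
    filter_upwards [eventually_ge_atTop (M+1)] with j hj
    obtain ⟨K, rfl⟩ : ∃ K, j = K + 1 := ⟨j - 1, by omega⟩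
    have hK : M ≤ K := by omega
    have hC := claim K hK
    have hIco : ∑ n ∈ Finset.Ico (M+1) (K+1), b n
        = ∑ n ∈ Finset.range (K+1), b n - ∑ n ∈ Finset.range (M+1), b n := by
      rw [Finset.sum_Ico_eq_sub _ (by omega)]
    have hS1 : 0 ≤ S (K+1) := by
      have h := hM (K+1) (by omega)
      have : (0:ℝ) ≤ (ℓ/2) * ((K+1:ℕ):ℝ) := by positivity
      linarith
    have hSb : 0 ≤ S (K+1) * b K := mul_nonneg hS1 (hbpos K).le
    have hMb : 0 ≤ ((M:ℝ)+1) * b M := by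
      have := (hbpos M).le
      have : (0:ℝ) ≤ (M:ℝ) := Nat.cast_nonneg M
      positivity
    have hKb : ((K:ℝ)+1) * b K ≤ 1 := by
      have hpK : ((K:ℝ)+2) ≤ (p K : ℝ) := by exact_mod_cast hpn K
      have h2 : b K ≤ ((K:ℝ)+2)⁻¹ := by
        simp only [hbdef]
        exact inv_anti₀ (by positivity) hpK
      have hK2 : (0:ℝ) < (K:ℝ)+2 := by positivity
      calc ((K:ℝ)+1) * b K ≤ ((K:ℝ)+1) * ((K:ℝ)+2)⁻¹ :=
            mul_le_mul_of_nonneg_left h2 (by positivity)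
        _ ≤ 1 := by rw [mul_inv_le_iff₀ hK2]; linarith
    rw [hIco] at hC
    nlinarith [hC, mul_le_mul_of_nonneg_left hKb (le_of_lt (half_pos hℓ)),
      mul_nonneg (le_of_lt (half_pos hℓ)) hSb, mul_nonneg (le_of_lt (half_pos hℓ)) hMb]
  have htop : Tendsto A atTop atTop := by
    apply tendsto_atTop_mono' atTop hev
    apply tendsto_atTop_add_const_left
    exact (hdiv.const_mul_atTop (half_pos hℓ))
  exact not_tendsto_atTop_of_tendsto_nhds hl htop

/-- If the primes `p n` have positive natural density `d` and the expectations
`(1/n) ∑_{i<n} c i / p i` converge to a nonzero limit `ℓ`, then the series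
`∑ c n / p n ^ 2` diverges. -/
theorem series_diverges_of_nonzero_expectation_limit
    (p : ℕ → ℕ) (hp : ∀ n, (p n).Prime) (hmono : StrictMono p)
    (d : ℝ) (hd : 0 < d)
    (hdens : Tendsto
      (fun t : ℝ => (Nat.card {n : ℕ | (p n : ℝ) ≤ t} : ℝ) * Real.log t / t)
      atTop (nhds d))
    (c : ℕ → ℝ) (ℓ : ℝ) (hℓ : ℓ ≠ 0)
    (hexp : Tendsto (fun n : ℕ => (∑ i ∈ Finset.range n, c i / (p i : ℝ)) / n)
      atTop (nhds ℓ)) :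
    ¬ ∃ l : ℝ, Tendsto (fun N => ∑ n ∈ Finset.range N, c n / (p n : ℝ) ^ 2)
      atTop (nhds l) := by
  rintro ⟨l, hl⟩
  rcases hℓ.lt_or_gt with h | h
  · refine auxpos p hp hmono d hd hdens (fun n => -c n) (-ℓ) (by linarith) ?_ (-l) ?_
    · simpa [neg_div, Finset.sum_neg_distrib] using hexp.neg
    · simpa [neg_div, Finset.sum_neg_distrib] using hl.neg
  · exact auxpos p hp hmono d hd hdens c ℓ h hexp l hl
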